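/- Let R be a Noetherian ring and I a prime ideal generated by a regular sequence. Then for every positive integer e, every associated prime of R/I^e equals I; in particular I^e is an I-primary ideal. -/

import Mathlib

/-!
STATEMENT 4: If `I` is a prime ideal of a Noetherian ring `R` generated by a regular
sequence, then for every `e ≥ 1` every associated prime of `R/I^e` equals `I`;
in particular `I^e` is an `I`-primary ideal.
-/


open MvPolynomial Ideal

section Helpers

variable {R : Type*} [CommRing R]

/-- product of powers lies in power of ideal -/
lemma prod_pow_mem_pow {ι : Type*} (I : Ideal R) (s : Finset ι) (f : ι → R) (g : ι → ℕ)
    (hf : ∀ i ∈ s, f i ∈ I) : (∏ i ∈ s, f i ^ g i) ∈ I ^ (∑ i ∈ s, g i) := by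
  classical
  induction s using Finset.induction_on with
  | empty => simp [Ideal.one_eq_top]
  | @insert j t hns ih =>

    rw [Finset.prod_insert hns, Finset.sum_insert hns, pow_add]
    exact Ideal.mul_mem_mul (Ideal.pow_mem_pow (hf j (Finset.mem_insert_self j t)) _)
      (ih fun i hi => hf i (Finset.mem_insert_of_mem hi))

lemma eval_mem_mul_pow {n : ℕ} (a : Fin n → R) (I K : Ideal R) {F : MvPolynomial (Fin n) R}
    {m : ℕ} (hF : F.IsHomogeneous m) (hvar : ∀ d ∈ F.support, ∀ i ∈ d.support, a i ∈ I)
    (hcoeff : ∀ d, F.coeff d ∈ K) : eval a F ∈ K * I ^ m := by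
  rw [eval_eq]
  refine Ideal.sum_mem _ fun d hd => ?_
  have hdeg : (∑ i ∈ d.support, d i) = m := by
    have h1 := hF (mem_support_iff.mp hd)
    rwa [Pi.one_def, ← Finsupp.degree_eq_weight_one, Finsupp.degree_apply] at h1
  rw [← hdeg]
  exact Ideal.mul_mem_mul (hcoeff d) (prod_pow_mem_pow I _ _ _ (hvar d hd))

lemma eval_mem_pow {n : ℕ} (a : Fin n → R) (I : Ideal R) {F : MvPolynomial (Fin n) R}
    {m : ℕ} (hF : F.IsHomogeneous m) (hvar : ∀ d ∈ F.support, ∀ i ∈ d.support, a i ∈ I) :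
    eval a F ∈ I ^ m := by
  have := eval_mem_mul_pow a I ⊤ hF hvar (fun d => Submodule.mem_top)
  rwa [top_mul] at this

lemma mem_pow_iff_eval {n : ℕ} (a : Fin n → R) (k : ℕ) (z : R) :
    z ∈ (span (Set.range a)) ^ k ↔
      ∃ F : MvPolynomial (Fin n) R, F.IsHomogeneous k ∧ eval a F = z := by
  constructor
  · induction k generalizing z with
    | zero =>
      intro _
      exact ⟨C z, isHomogeneous_C _ _, eval_C z⟩
    | succ k ih =>
      rw [pow_succ]
      intro hz
      refine Submodule.mul_induction_on hz ?_ ?_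
      · intro x hx y hy
        obtain ⟨F, hF, hFx⟩ := ih x hx
        obtain ⟨c, hc⟩ := Ideal.mem_span_range_iff_exists_fun.mp hy
        refine ⟨F * ∑ i, C (c i) * X i, hF.mul (IsHomogeneous.sum _ _ _
          fun i _ => isHomogeneous_C_mul_X _ _), ?_⟩
        rw [_root_.map_mul, hFx, map_sum]
        simp only [_root_.map_mul, eval_C, eval_X]
        rw [← hc]
      · rintro x y ⟨F, hF, hFx⟩ ⟨G, hG, hGy⟩
        exact ⟨F + G, hF.add hG, by rw [_root_.map_add, hFx, hGy]⟩
  · rintro ⟨F, hF, rfl⟩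
    exact eval_mem_pow a _ hF fun d _ i _ => Ideal.subset_span ⟨i, rfl⟩

/-- any element of `I^(k+1)` is the evaluation of a homogeneous polynomial of degree `k`
all of whose coefficients lie in `I`. -/
lemma exists_eval_eq_of_mem_pow_succ {n : ℕ} (a : Fin n → R) (k : ℕ) {z : R}
    (hz : z ∈ (span (Set.range a)) ^ (k + 1)) :
    ∃ G : MvPolynomial (Fin n) R, G.IsHomogeneous k ∧ (∀ d, G.coeff d ∈ span (Set.range a)) ∧
      eval a G = z := by
  rw [pow_succ] at hz
  refine Submodule.mul_induction_on hz ?_ ?_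
  · intro x hx y hy
    obtain ⟨F, hF, hFx⟩ := (mem_pow_iff_eval a k x).mp hx
    refine ⟨C y * F, hF.C_mul y, fun d => ?_, ?_⟩
    · rw [coeff_C_mul]; exact Ideal.mul_mem_right _ _ hy
    · rw [_root_.map_mul, eval_C, hFx, mul_comm]
  · rintro x y ⟨F, hF, hFc, hFx⟩ ⟨G, hG, hGc, hGy⟩
    exact ⟨F + G, hF.add hG, fun d => by rw [coeff_add]; exact add_mem (hFc d) (hGc d),
      by rw [_root_.map_add, hFx, hGy]⟩

/-- Quasi-regularity property for a family. -/
def QuasiReg {n : ℕ} (a : Fin n → R) : Prop :=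
  ∀ (k : ℕ) (F : MvPolynomial (Fin n) R), F.IsHomogeneous k →
    eval a F ∈ (span (Set.range a)) ^ (k + 1) → ∀ d, F.coeff d ∈ span (Set.range a)

/-- From quasi-regularity and `(I : x) = I` we get `(I^m : x) = I^m`. -/
lemma colon_pow {n : ℕ} {a : Fin n → R} (hQR : QuasiReg a) {x : R}
    (hx : ∀ c, x * c ∈ span (Set.range a) → c ∈ span (Set.range a)) :
    ∀ (m : ℕ) (z : R), x * z ∈ (span (Set.range a)) ^ m → z ∈ (span (Set.range a)) ^ m := by
  intro m
  induction m with
  | zero => intro z _; simp [Ideal.one_eq_top]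
  | succ m ih =>
    intro z hz
    have hzm : z ∈ (span (Set.range a)) ^ m :=
      ih z (Ideal.pow_le_pow_right (Nat.le_succ m) hz)
    obtain ⟨F, hF, hFz⟩ := (mem_pow_iff_eval a m z).mp hzm
    have hCx : eval a (C x * F) ∈ (span (Set.range a)) ^ (m + 1) := by
      rw [_root_.map_mul, eval_C, hFz]; exact hz
    have hcoeff : ∀ d, F.coeff d ∈ span (Set.range a) := by
      intro d
      have := hQR m (C x * F) (hF.C_mul x) hCx d
      rw [coeff_C_mul] at this
      exact hx _ this
    have : eval a F ∈ (span (Set.range a)) * (span (Set.range a)) ^ m :=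
      eval_mem_mul_pow a _ _ hF (fun d _ i _ => Ideal.subset_span ⟨i, rfl⟩) hcoeff
    rwa [← pow_succ', hFz] at this

end Helpers

section Decomp

variable {R : Type*} [CommRing R]

lemma Finsupp.degree_add' {σ : Type*} (a b : σ →₀ ℕ) :
    Finsupp.degree (a + b) = Finsupp.degree a + Finsupp.degree b := by
  simp [Finsupp.degree_eq_weight_one]

lemma sub_single_add {n : ℕ} {d : Fin (n + 1) →₀ ℕ} (hd : d (Fin.last n) ≠ 0) :
    (d - Finsupp.single (Fin.last n) 1) + Finsupp.single (Fin.last n) 1 = d := by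
  ext i
  by_cases hi : i = Fin.last n
  · subst hi
    simp only [Finsupp.add_apply, Finsupp.tsub_apply, Finsupp.single_eq_same]
    omega
  · simp [Finsupp.add_apply, Finsupp.tsub_apply, Finsupp.single_apply, Ne.symm hi]

lemma exists_mapDomain_eq {n : ℕ} {d : Fin (n + 1) →₀ ℕ} (hd : d (Fin.last n) = 0) :
    ∃ e : Fin n →₀ ℕ, Finsupp.mapDomain Fin.castSucc e = d := by
  classical
  refine ⟨Finsupp.comapDomain Fin.castSucc d
    (Fin.castSucc_injective n).injOn, ?_⟩
  ext i
  by_cases hi : i = Fin.last n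
  · subst hi
    rw [Finsupp.mapDomain_notin_range, hd]
    rintro ⟨j, hj⟩
    exact (Fin.castSucc_lt_last j).ne hj
  · obtain ⟨j, rfl⟩ := Fin.exists_castSucc_eq.mpr hi
    rw [Finsupp.mapDomain_apply (Fin.castSucc_injective n)]
    rfl

lemma Finsupp.degree_mapDomain' {σ τ : Type*} (f : σ → τ) (e : σ →₀ ℕ) :
    (Finsupp.mapDomain f e).degree = e.degree := by
  have h1 : ∀ (d : σ →₀ ℕ), d.degree = d.sum fun _ c => c := fun _ => rfl
  have h2 : ∀ (d : τ →₀ ℕ), d.degree = d.sum fun _ c => c := fun _ => rfl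
  rw [h1, h2, Finsupp.sum_mapDomain_index] <;> simp

/-- Decompose a homogeneous polynomial of positive degree into the part divisible by the
last variable and the part not involving the last variable. -/
lemma exists_decomp {n k : ℕ} (F : MvPolynomial (Fin (n + 1)) R)
    (hF : F.IsHomogeneous (k + 1)) :
    ∃ (Q : MvPolynomial (Fin (n + 1)) R) (P : MvPolynomial (Fin n) R),
      Q.IsHomogeneous k ∧ P.IsHomogeneous (k + 1) ∧
      F = X (Fin.last n) * Q + rename Fin.castSucc P := by
  classical
  set ℓ := Fin.last n
  have hdeg : ∀ d ∈ F.support, Finsupp.degree d = k + 1 := fun d hd => by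
    have h1 := hF (mem_support_iff.mp hd)
    rwa [Pi.one_def, ← Finsupp.degree_eq_weight_one] at h1
  set s₁ := F.support.filter fun d => d ℓ ≠ 0 with hs₁
  set s₂ := F.support.filter fun d => ¬ d ℓ ≠ 0 with hs₂
  -- choice of preimages for s₂
  have hpull : ∀ d ∈ s₂, ∃ e : Fin n →₀ ℕ, Finsupp.mapDomain Fin.castSucc e = d := by
    intro d hd
    exact exists_mapDomain_eq (by simpa using (Finset.mem_filter.mp hd).2)
  choose pull hpull using hpull
  refine ⟨∑ d ∈ s₁.attach, monomial (d.1 - Finsupp.single ℓ 1) (F.coeff d.1),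
    ∑ d ∈ s₂.attach, monomial (pull d.1 d.2) (F.coeff d.1), ?_, ?_, ?_⟩
  · refine IsHomogeneous.sum _ _ _ fun d _ => isHomogeneous_monomial _ ?_
    have hd1 : d.1 ℓ ≠ 0 := (Finset.mem_filter.mp d.2).2
    have h2 : Finsupp.degree ((d.1 - Finsupp.single ℓ 1) + Finsupp.single ℓ 1) = k + 1 := by
      rw [sub_single_add hd1]
      exact hdeg d.1 (Finset.mem_filter.mp d.2).1
    rw [Finsupp.degree_add'] at h2
    have : Finsupp.degree (Finsupp.single ℓ 1) = 1 := by
      simp [Finsupp.degree_apply, Finsupp.support_single_ne_zero]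
    omega
  · refine IsHomogeneous.sum _ _ _ fun d _ => isHomogeneous_monomial _ ?_
    have h2 : Finsupp.degree (Finsupp.mapDomain (Fin.castSucc (n := n)) (pull d.1 d.2)) = k + 1 := by
      rw [hpull d.1 d.2]
      exact hdeg d.1 (Finset.mem_filter.mp d.2).1
    rwa [Finsupp.degree_mapDomain'] at h2
  · conv_lhs => rw [← support_sum_monomial_coeff F]
    rw [← Finset.sum_filter_add_sum_filter_not F.support (fun d => d ℓ ≠ 0), ← hs₁, ← hs₂]
    congr 1
    · rw [Finset.mul_sum, ← Finset.sum_attach s₁ (fun d => monomial d (F.coeff d))]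
      refine Finset.sum_congr rfl fun d _ => ?_
      rw [X, monomial_mul, one_mul]
      exact (congrArg (fun e => monomial e (F.coeff d.1))
        ((add_comm _ _).trans (sub_single_add (Finset.mem_filter.mp d.2).2))).symm
    · rw [map_sum, ← Finset.sum_attach s₂ (fun d => monomial d (F.coeff d))]
      refine Finset.sum_congr rfl fun d _ => ?_
      rw [rename_monomial, hpull d.1 d.2]

end Decomp

section Main

open RingTheory.Sequence

variable {R : Type*} [CommRing R]

lemma ideal_smul_top (J : Ideal R) : (J • ⊤ : Submodule R R) = J := by
  apply le_antisymm
  · rw [Submodule.smul_le]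
    intro r hr m _
    exact J.mul_mem_right m hr
  · intro z hz
    simpa using Submodule.smul_mem_smul hz (Submodule.mem_top (x := (1 : R)))

lemma colon_of_smulreg {J : Ideal R} {x : R}
    (h : IsSMulRegular (R ⧸ (J • ⊤ : Submodule R R)) x) :
    ∀ c, x * c ∈ J → c ∈ J := by
  intro c hc
  have h0 : x • (Submodule.Quotient.mk c : R ⧸ (J • ⊤ : Submodule R R)) = x • 0 := by
    rw [smul_zero, ← Submodule.Quotient.mk_smul, Submodule.Quotient.mk_eq_zero,
      ideal_smul_top, smul_eq_mul]
    exact hc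
  have := h h0
  rwa [Submodule.Quotient.mk_eq_zero, ideal_smul_top] at this

lemma isWeaklyRegular_take {rs : List R} (h : IsWeaklyRegular R rs) (n : ℕ) :
    IsWeaklyRegular R (rs.take n) := by
  constructor
  intro i hi
  have hlen : i < rs.length := by
    have h3 := hi
    rw [List.length_take] at h3
    omega
  have hin : i ≤ n := by
    have h3 := hi
    rw [List.length_take] at h3
    omega
  have h1 : (rs.take n).take i = rs.take i := by
    rw [List.take_take, min_eq_left hin]
  have h2 : (rs.take n)[i] = rs[i] := List.getElem_take
  rw [h1, h2]
  exact h.regular_mod_prev i hlen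

lemma ofFn_take_castSucc {n : ℕ} (a : Fin (n + 1) → R) :
    (List.ofFn a).take n = List.ofFn (fun i : Fin n => a i.castSucc) := by
  apply List.ext_getElem
  · simp [Nat.min_def]
  · intro i h1 h2
    simp only [List.getElem_take, List.getElem_ofFn]
    congr 1

lemma ofList_ofFn_eq_span {n : ℕ} (a : Fin n → R) :
    Ideal.ofList (List.ofFn a) = span (Set.range a) := by
  unfold Ideal.ofList
  congr 1
  ext r
  simp [List.mem_ofFn, Set.mem_range, eq_comm]

theorem quasiReg_of_isWeaklyRegular :
    ∀ {n : ℕ} (a : Fin n → R), IsWeaklyRegular R (List.ofFn a) → QuasiReg a := by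
  intro n
  induction n with
  | zero =>
    intro a _ k F hF hev d
    obtain ⟨c, rfl⟩ := MvPolynomial.C_surjective (Fin 0) F
    have hc : c ∈ span (Set.range a) := by
      have := Ideal.pow_le_self (Nat.succ_ne_zero k) hev
      rwa [eval_C] at this
    rw [coeff_C]
    split <;> [exact hc; exact zero_mem _]
  | succ n IH =>
    intro a hreg
    set ℓ := Fin.last n
    set a' : Fin n → R := fun i => a i.castSucc with ha'
    set I := span (Set.range a) with hIdef
    set J := span (Set.range a') with hJdef
    have hreg' : IsWeaklyRegular R (List.ofFn a') := by
      have := isWeaklyRegular_take hreg n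
      rwa [ofFn_take_castSucc] at this
    have hQR' : QuasiReg a' := IH a' hreg'
    have hJI : J ≤ I := span_mono (by rintro r ⟨i, rfl⟩; exact ⟨i.castSucc, rfl⟩)
    have hxI : a ℓ ∈ I := subset_span ⟨ℓ, rfl⟩
    -- the colon property for `a ℓ` modulo `J`
    have hx : ∀ c, a ℓ * c ∈ J → c ∈ J := by
      have hn : n < (List.ofFn a).length := by simp
      have h0 := hreg.regular_mod_prev n hn
      rw [ofFn_take_castSucc, ofList_ofFn_eq_span] at h0
      have hel : (List.ofFn a)[n] = a ℓ := by
        rw [List.getElem_ofFn]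
        rfl
      rw [hel] at h0
      exact colon_of_smulreg h0
    intro k
    induction k with
    | zero =>
      intro F hF hev d
      by_cases hc : F.coeff d = 0
      · rw [hc]; exact zero_mem _
      have hd0 : ∀ d', F.coeff d' ≠ 0 → d' = 0 := by
        intro d' hd'
        have := hF hd'
        rw [Pi.one_def, ← Finsupp.degree_eq_weight_one] at this
        exact (Finsupp.degree_eq_zero_iff d').mp this
      have hsupp : F.support ⊆ {0} := by
        intro d' hd'
        rw [Finset.mem_singleton]
        exact hd0 d' (mem_support_iff.mp hd')
      have heq : eval a F = F.coeff 0 := by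
        rw [eval_eq]
        rw [Finset.sum_subset hsupp (fun x _ hx => by
          rw [notMem_support_iff.mp hx, zero_mul])]
        simp
      rw [hd0 d hc]
      rw [pow_one] at hev
      rwa [heq] at hev
    | succ k ihk =>
      intro F hF hev d
      obtain ⟨G, hG, hGc, hGev⟩ := exists_eval_eq_of_mem_pow_succ a (k + 1) hev
      set F' := F - G with hF'def
      have hF' : F'.IsHomogeneous (k + 1) := hF.sub hG
      have hev0 : eval a F' = 0 := by rw [hF'def, map_sub, hGev, sub_self]
      obtain ⟨Q, P, hQ, hP, hdec⟩ := exists_decomp F' hF'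
      have hevdec : a ℓ * eval a Q + eval a' P = 0 := by
        rw [← hev0, hdec, _root_.map_add, _root_.map_mul, eval_X, eval_rename]
        rfl
      have hPJ : eval a' P ∈ J ^ (k + 1) := (mem_pow_iff_eval a' (k + 1) _).mpr ⟨P, hP, rfl⟩
      have h1 : a ℓ * eval a Q ∈ J ^ (k + 1) := by
        rw [eq_neg_of_add_eq_zero_left hevdec]; exact neg_mem hPJ
      have hQJ : eval a Q ∈ J ^ (k + 1) := colon_pow hQR' hx (k + 1) _ h1
      have hQc : ∀ d', Q.coeff d' ∈ I :=
        ihk Q hQ (Ideal.pow_right_mono hJI (k + 1) hQJ)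
      obtain ⟨H, hH, hHev⟩ := (mem_pow_iff_eval a' (k + 1) _).mp hQJ
      set W := P + C (a ℓ) * H with hWdef
      have hW : W.IsHomogeneous (k + 1) := hP.add (hH.C_mul _)
      have hWev : eval a' W = 0 := by
        rw [hWdef, _root_.map_add, _root_.map_mul, eval_C, hHev, add_comm]
        exact hevdec
      have hWc : ∀ d', W.coeff d' ∈ J := by
        intro d'
        exact hQR' (k + 1) W hW (by rw [hWev]; exact zero_mem _) d'
      have hPc : ∀ d', P.coeff d' ∈ I := by
        intro d'
        have : P.coeff d' = W.coeff d' - a ℓ * H.coeff d' := by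
          rw [hWdef, coeff_add, coeff_C_mul]; ring
        rw [this]
        exact sub_mem (hJI (hWc d')) (I.mul_mem_right _ hxI)
      have hF'c : F'.coeff d ∈ I := by
        classical
        rw [hdec, coeff_add]
        refine add_mem ?_ ?_
        · rw [mul_comm, coeff_mul_X']
          split
          · exact hQc _
          · exact zero_mem _
        · by_cases hz : (rename Fin.castSucc P).coeff d = 0
          · rw [hz]; exact zero_mem _
          · obtain ⟨u, hud, _⟩ := coeff_rename_ne_zero _ _ _ hz
            have := coeff_rename_mapDomain (Fin.castSucc) (Fin.castSucc_injective n) P u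
            rw [hud] at this
            rw [this]
            exact hPc u
      have : F.coeff d = F'.coeff d + G.coeff d := by
        rw [hF'def, coeff_sub]; ring
      rw [this]
      exact add_mem hF'c (hGc d)

end Main

theorem stmt4 {R : Type*} [CommRing R] [IsNoetherianRing R]
    (I : Ideal R) (hprime : I.IsPrime)
    (as : List R) (hreg : RingTheory.Sequence.IsRegular R as) (hI : I = Ideal.ofList as)
    (e : ℕ) (he : 0 < e) :
    (∀ P ∈ associatedPrimes R (R ⧸ I ^ e), P = I) ∧ (I ^ e).IsPrimary := by
  classical
  set a : Fin as.length → R := fun i => as.get i with ha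
  have hofn : List.ofFn a = as := List.ofFn_get as
  have hspan : I = span (Set.range a) := by
    rw [hI]
    unfold Ideal.ofList
    congr 1
    ext r
    simp only [Set.mem_range, Set.mem_setOf_eq, List.mem_iff_get, ha, eq_comm]
  have hwreg : RingTheory.Sequence.IsWeaklyRegular R (List.ofFn a) := by
    rw [hofn]; exact hreg.toIsWeaklyRegular
  have hQR := quasiReg_of_isWeaklyRegular a hwreg
  have key : ∀ x, x ∉ I → ∀ (m : ℕ) (z : R), x * z ∈ I ^ m → z ∈ I ^ m := by
    intro x hx m z hz
    rw [hspan]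
    refine colon_pow hQR ?_ m z (by rwa [hspan] at hz)
    intro c hc
    rw [← hspan] at hc ⊢
    rcases hprime.mem_or_mem hc with h | h
    · exact absurd h hx
    · exact h
  have hne : I ≠ ⊤ := by
    intro htop
    apply hreg.top_ne_smul
    rw [ideal_smul_top, ← hI, htop]
  have hpow_ne : I ^ e ≠ ⊤ := by
    intro h
    exact hne (top_le_iff.mp (h ▸ Ideal.pow_le_self he.ne'))
  constructor
  · intro P hP
    obtain ⟨hPprime, y, hy⟩ := isAssociatedPrime_iff.mp hP
    obtain ⟨z, rfl⟩ := Ideal.Quotient.mk_surjective y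
    have smul_eq : ∀ r : R, r • (Ideal.Quotient.mk (I ^ e) z) = Ideal.Quotient.mk (I ^ e) (r * z) := by
      intro r
      rw [Algebra.smul_def, Ideal.Quotient.algebraMap_eq, ← _root_.map_mul]
    have hz0 : (Ideal.Quotient.mk (I ^ e) z) ≠ 0 := by
      intro h0
      rw [h0] at hy
      have : P = ⊤ := by
        rw [hy]
        rw [eq_top_iff]; intro r _; rw [Submodule.mem_colon_singleton, smul_zero]; exact zero_mem _
      exact hPprime.ne_top this
    have hznot : z ∉ I ^ e := fun h => hz0 (Ideal.Quotient.eq_zero_iff_mem.mpr h)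
    apply le_antisymm
    · intro x hxP
      rw [hy, Submodule.mem_colon_singleton, smul_eq, Submodule.mem_bot,
        Ideal.Quotient.eq_zero_iff_mem] at hxP
      by_contra hxI2
      exact hznot (key x hxI2 e z hxP)
    · have hpow : I ^ e ≤ P := by
        rw [hy]
        intro r hr
        rw [Submodule.mem_colon_singleton, smul_eq, Submodule.mem_bot, Ideal.Quotient.eq_zero_iff_mem]
        exact Ideal.mul_mem_right z _ hr
      exact Ideal.IsPrime.le_of_pow_le (hP := hPprime) hpow
  · rw [Ideal.isPrimary_iff]
    refine ⟨hpow_ne, ?_⟩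
    intro x y hxy
    by_cases hyI : y ∈ I
    · right
      rw [Ideal.radical_pow (I := I) he.ne', hprime.radical]
      exact hyI
    · left
      exact key y hyI e x (by rwa [mul_comm] at hxy)
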